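/- (Theorem 2, claim (ii): lower bound on the complexity of selected structures.) Assume Conditions (A1), (A2) and (A3), and assume κ ≥ ν/α. Fix δ ∈ (0,1) and τ₀ > ((1+δ)/(1−δ))·3(1+κα)/α, and let I_* = I_*(θ) be a minimizer over I ∈ 𝓘 of ‖θ − P_I θ‖² + τ₀σ²ρ(I). Then for every θ ∈ Θ and every M ≥ 0, E_θ[ Σ_{ I ∈ 𝓘 : ρ(I) ≤ δρ(I_*) − M } p̂_I ] ≤ C_ν e^{−(τ₀α/3) M}. -/

import Mathlib

open MeasureTheory Real

/-- The orthogonal projection onto a linear subspace of `ℝ^N`, as a map `ℝ^N → ℝ^N`. -/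
noncomputable def proj {N : ℕ} (K : Submodule ℝ (EuclideanSpace ℝ (Fin N))) :
    EuclideanSpace ℝ (Fin N) →L[ℝ] EuclideanSpace ℝ (Fin N) :=
  K.subtypeL.comp (K.orthogonalProjection)


open scoped RealInnerProductSpace

lemma proj_mem {N : ℕ} (K : Submodule ℝ (EuclideanSpace ℝ (Fin N))) (y : EuclideanSpace ℝ (Fin N)) :
    proj K y ∈ K := (K.orthogonalProjection y).2

lemma inner_sub_proj {N : ℕ} (K : Submodule ℝ (EuclideanSpace ℝ (Fin N)))
    (y : EuclideanSpace ℝ (Fin N)) {z : EuclideanSpace ℝ (Fin N)} (hz : z ∈ K) :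
    ⟪z, y - proj K y⟫ = 0 := by
  have h : y - proj K y ∈ Kᗮ := K.sub_starProjection_mem_orthogonal y
  exact (Submodule.mem_orthogonal K _).1 h z hz

lemma pyth_proj {N : ℕ} (K : Submodule ℝ (EuclideanSpace ℝ (Fin N)))
    (y : EuclideanSpace ℝ (Fin N)) {z : EuclideanSpace ℝ (Fin N)} (hz : z ∈ K) :
    ‖y - z‖ ^ 2 = ‖y - proj K y‖ ^ 2 + ‖proj K y - z‖ ^ 2 := by
  have hmem : proj K y - z ∈ K := sub_mem (proj_mem K y) hz
  have hinner : ⟪proj K y - z, y - proj K y⟫ = 0 := inner_sub_proj K y hmem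
  have h0 : y - z = (y - proj K y) + (proj K y - z) := by abel
  rw [h0, norm_add_sq_real, real_inner_comm, hinner]
  ring

lemma proj_nested_sq_le {N : ℕ} {K K' : Submodule ℝ (EuclideanSpace ℝ (Fin N))}
    (h : K ≤ K') (x : EuclideanSpace ℝ (Fin N)) :
    ‖proj K' x - proj K x‖ ^ 2 ≤ ‖proj K' x‖ ^ 2 := by
  have h1 : ⟪proj K x, x - proj K x⟫ = 0 := inner_sub_proj K x (proj_mem K x)
  have h2 : ⟪proj K x, x - proj K' x⟫ = 0 := inner_sub_proj K' x (h (proj_mem K x))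
  have h3 : ⟪proj K x, proj K' x - proj K x⟫ = 0 := by
    have h0 : proj K' x - proj K x = (x - proj K x) - (x - proj K' x) := by abel
    rw [h0, inner_sub_right, h1, h2]; ring
  have h4 := norm_add_sq_real (proj K x) (proj K' x - proj K x)
  have h5 : proj K x + (proj K' x - proj K x) = proj K' x := by abel
  rw [h5, h3] at h4
  nlinarith [sq_nonneg ‖proj K x‖]

/-- Bound on the model–averaging weight via the ratio with a larger structure. -/
lemma aux_ma_bound {N : ℕ} {ι : Type*} [Countable ι]
    (L : ι → Submodule ℝ (EuclideanSpace ℝ (Fin N)))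
    (σ : ℝ) (hσ : 0 < σ) (α : ℝ) (hα0 : 0 < α) (hα1 : α ≤ 1)
    (ν : ℝ) (hν : 0 < ν)
    (ρ : ι → ℝ) (hρ0 : ∀ i, 0 ≤ ρ i)
    (hA2sum : Summable fun i : ι => Real.exp (-ν * ρ i))
    (κ : ℝ) (hκpos : 0 < κ) (hνκα : ν ≤ κ * α)
    (i j : ι) (y : EuclideanSpace ℝ (Fin N)) :
    Real.exp (-κ * ρ i) * Real.exp (-‖y - proj (L i) y‖ ^ 2 / (2 * σ ^ 2)) /
        ∑' k : ι, Real.exp (-κ * ρ k) * Real.exp (-‖y - proj (L k) y‖ ^ 2 / (2 * σ ^ 2))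
      ≤ Real.exp (α * (κ * (ρ j - ρ i) +
          (‖y - proj (L j) y‖ ^ 2 - ‖y - proj (L i) y‖ ^ 2) / (2 * σ ^ 2))) := by
  set f : ι → ℝ :=
    fun k => Real.exp (-κ * ρ k) * Real.exp (-‖y - proj (L k) y‖ ^ 2 / (2 * σ ^ 2)) with hf
  have hσ2 : (0:ℝ) < σ ^ 2 := by positivity
  have hfnn : ∀ k, 0 ≤ f k := fun k => by positivity
  have hfle : ∀ k, f k ≤ Real.exp (-ν * ρ k) := by
    intro k
    have h1 : Real.exp (-‖y - proj (L k) y‖ ^ 2 / (2 * σ ^ 2)) ≤ 1 := by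
      apply Real.exp_le_one_iff.2
      rw [neg_div]
      have : (0:ℝ) ≤ ‖y - proj (L k) y‖ ^ 2 / (2 * σ ^ 2) := by positivity
      linarith
    have h2 : Real.exp (-κ * ρ k) ≤ Real.exp (-ν * ρ k) := by
      apply Real.exp_le_exp.2
      have : ν * ρ k ≤ κ * ρ k := by
        apply mul_le_mul_of_nonneg_right _ (hρ0 k)
        nlinarith
      linarith
    calc f k ≤ Real.exp (-κ * ρ k) * 1 := by
          apply mul_le_mul_of_nonneg_left h1 (Real.exp_nonneg _)
      _ = Real.exp (-κ * ρ k) := mul_one _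
      _ ≤ Real.exp (-ν * ρ k) := h2
  have hsum : Summable f := Summable.of_nonneg_of_le hfnn hfle hA2sum
  have hjle : f j ≤ ∑' k, f k := hsum.le_tsum j (fun k _ => hfnn k)
  have hile : f i ≤ ∑' k, f k := hsum.le_tsum i (fun k _ => hfnn k)
  have hjpos : 0 < f j := by positivity
  have hratio : f i / (∑' k, f k) ≤ f i / f j :=
    div_le_div_of_nonneg_left (hfnn i) hjpos hjle
  have hone : f i / (∑' k, f k) ≤ 1 := div_le_one_of_le₀ hile (le_trans (hfnn i) hile)
  have hfr : f i / f j = Real.exp (κ * (ρ j - ρ i) +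
      (‖y - proj (L j) y‖ ^ 2 - ‖y - proj (L i) y‖ ^ 2) / (2 * σ ^ 2)) := by
    simp only [hf]
    rw [← Real.exp_add, ← Real.exp_add, ← Real.exp_sub]
    congr 1
    ring
  set E : ℝ := κ * (ρ j - ρ i) +
      (‖y - proj (L j) y‖ ^ 2 - ‖y - proj (L i) y‖ ^ 2) / (2 * σ ^ 2) with hE
  rcases le_or_gt E 0 with hE0 | hE0
  · calc f i / (∑' k, f k) ≤ f i / f j := hratio
      _ = Real.exp E := hfr
      _ ≤ Real.exp (α * E) := by apply Real.exp_le_exp.2; nlinarith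
  · calc f i / (∑' k, f k) ≤ 1 := hone
      _ ≤ Real.exp (α * E) := by apply Real.one_le_exp; positivity

/-- The geometric/oracle bound on the exponent. -/
lemma aux_geom_bound {N : ℕ}
    (Ki Kj Ks : Submodule ℝ (EuclideanSpace ℝ (Fin N)))
    (hij : Ki ≤ Kj) (hsj : Ks ≤ Kj)
    (σ : ℝ) (hσ : 0 < σ) (α : ℝ) (hα0 : 0 < α)
    (κ : ℝ) (hκpos : 0 < κ)
    (ρi ρj r τ₀ : ℝ) (hρj : ρj ≤ ρi + r)
    (θ y : EuclideanSpace ℝ (Fin N))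
    (horacle : ‖θ - proj Ks θ‖ ^ 2 + τ₀ * σ ^ 2 * r ≤ ‖θ - proj Ki θ‖ ^ 2 + τ₀ * σ ^ 2 * ρi) :
    α * (κ * (ρj - ρi) + (‖y - proj Kj y‖ ^ 2 - ‖y - proj Ki y‖ ^ 2) / (2 * σ ^ 2))
      ≤ α * κ * r - α * τ₀ / 3 * (r - ρi) + α * ‖proj Kj (σ⁻¹ • (y - θ))‖ ^ 2 := by
  have hσ2 : (0:ℝ) < σ ^ 2 := by positivity
  have h2σ : (0:ℝ) < 2 * σ ^ 2 := by positivity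
  have main : ∀ Q V W E n bi bj bs : ℝ,
      0 ≤ Q → 0 ≤ V → 0 ≤ W → 0 ≤ n →
      bi = bj + Q ^ 2 →
      ‖θ - proj Ki θ‖ ^ 2 = E + V ^ 2 →
      ‖θ - proj Ks θ‖ ^ 2 = E + bs →
      0 ≤ bs →
      V ≤ Q + W →
      W ^ 2 ≤ σ ^ 2 * n ^ 2 →
      α * (κ * (ρj - ρi) + (bj - bi) / (2 * σ ^ 2))
        ≤ α * κ * r - α * τ₀ / 3 * (r - ρi) + α * n ^ 2 := by
    intro Q V W E n bi bj bs hQ hV hW hn hF1 hF3 hF4 hbs hvtri hwn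
    have hvlow : τ₀ * σ ^ 2 * (r - ρi) ≤ V ^ 2 := by linarith
    have hv2 : V ^ 2 ≤ (Q + W) ^ 2 := by nlinarith [hvtri, hV, hQ, hW]
    have hqv : 2 / 3 * V ^ 2 - 2 * W ^ 2 ≤ Q ^ 2 := by nlinarith [sq_nonneg (Q - 2 * W), hv2]
    have hqlow : (τ₀ * (r - ρi) / 3 - n ^ 2) * (2 * σ ^ 2) ≤ Q ^ 2 := by linarith
    have hdiv : τ₀ * (r - ρi) / 3 - n ^ 2 ≤ Q ^ 2 / (2 * σ ^ 2) := (le_div_iff₀ h2σ).2 hqlow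
    have hnd : (bj - bi) / (2 * σ ^ 2) = -(Q ^ 2 / (2 * σ ^ 2)) := by
      rw [← neg_div]; congr 1; linarith
    have hκr : κ * (ρj - ρi) ≤ κ * r := mul_le_mul_of_nonneg_left (by linarith) hκpos.le
    have hXY : κ * (ρj - ρi) + (bj - bi) / (2 * σ ^ 2)
        ≤ κ * r - τ₀ / 3 * (r - ρi) + n ^ 2 := by rw [hnd]; linarith
    have hfin := mul_le_mul_of_nonneg_left hXY hα0.le
    linarith [hfin]
  have hwn : ‖proj Kj (y - θ) - proj Ki (y - θ)‖ ^ 2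
      ≤ σ ^ 2 * ‖proj Kj (σ⁻¹ • (y - θ))‖ ^ 2 := by
    have h6 : ‖proj Kj (σ⁻¹ • (y - θ)) - proj Ki (σ⁻¹ • (y - θ))‖ ^ 2
        ≤ ‖proj Kj (σ⁻¹ • (y - θ))‖ ^ 2 := proj_nested_sq_le hij (σ⁻¹ • (y - θ))
    have heq : proj Kj (σ⁻¹ • (y - θ)) - proj Ki (σ⁻¹ • (y - θ))
        = σ⁻¹ • (proj Kj (y - θ) - proj Ki (y - θ)) := by
      rw [(proj Kj).map_smul, (proj Ki).map_smul, smul_sub]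
    rw [heq, norm_smul, Real.norm_eq_abs, abs_of_pos (inv_pos.2 hσ)] at h6
    have hid : σ ^ 2 * ((σ⁻¹ * ‖proj Kj (y - θ) - proj Ki (y - θ)‖) ^ 2)
        = ‖proj Kj (y - θ) - proj Ki (y - θ)‖ ^ 2 := by field_simp
    nlinarith [mul_le_mul_of_nonneg_left h6 hσ2.le]
  have hvqw : proj Kj θ - proj Ki θ
      = (proj Kj y - proj Ki y) - (proj Kj (y - θ) - proj Ki (y - θ)) := by
    rw [(proj Kj).map_sub, (proj Ki).map_sub]; abel
  have hvtri : ‖proj Kj θ - proj Ki θ‖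
      ≤ ‖proj Kj y - proj Ki y‖ + ‖proj Kj (y - θ) - proj Ki (y - θ)‖ := by
    rw [hvqw]; exact norm_sub_le _ _
  exact main ‖proj Kj y - proj Ki y‖ ‖proj Kj θ - proj Ki θ‖
    ‖proj Kj (y - θ) - proj Ki (y - θ)‖ (‖θ - proj Kj θ‖ ^ 2)
    ‖proj Kj (σ⁻¹ • (y - θ))‖ (‖y - proj Ki y‖ ^ 2) (‖y - proj Kj y‖ ^ 2)
    (‖proj Kj θ - proj Ks θ‖ ^ 2)
    (norm_nonneg _) (norm_nonneg _) (norm_nonneg _) (norm_nonneg _)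
    (pyth_proj Kj y (hij (proj_mem Ki y)))
    (pyth_proj Kj θ (hij (proj_mem Ki θ)))
    (pyth_proj Kj θ (hsj (proj_mem Ks θ)))
    (sq_nonneg _) hvtri hwn

/-- The final deterministic arithmetic. -/
lemma aux_arith (α ν δ κ τ₀ r ρi M dJ : ℝ) (hα0 : 0 < α) (hν : 0 < ν)
    (hδ0 : 0 < δ) (hδ1 : δ < 1)
    (hνκα : ν ≤ κ * α) (hM : 0 ≤ M) (hr : 0 ≤ r)
    (hkey : 3 * (1 + δ) * (1 + κ * α) < τ₀ * ((1 - δ) * α)) (hτpos : 0 < τ₀)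
    (cond : ρi ≤ δ * r - M) (hdJ : dJ ≤ ρi + r) :
    α * κ * r - α * τ₀ / 3 * (r - ρi) + dJ ≤ -ν * ρi + -(τ₀ * α / 3) * M := by
  have hc : (0:ℝ) ≤ α * τ₀ / 3 + 1 + ν := by positivity
  have h1 := mul_le_mul_of_nonneg_left cond hc
  have h2 := mul_le_mul_of_nonneg_left hkey.le hr
  have h3 : 0 ≤ r * δ * (κ * α - ν) :=
    mul_nonneg (mul_nonneg hr hδ0.le) (by linarith)
  nlinarith [h1, h2, h3]

/-- **Theorem 2, claim (ii)**: lower bound on the complexity of selected structures. Under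
Conditions (A1), (A2), (A3) and `κ ≥ ν/α`, with `I_*` the `τ₀`-oracle, for every `θ ∈ Θ` and
`M ≥ 0`, `E_θ[ Σ_{I : ρ(I) ≤ δρ(I_*) − M} p̂_I ] ≤ C_ν e^{−(τ₀α/3) M}`. -/
theorem structure_ddm_complexity_lower_bound
    {N : ℕ} {ι : Type*} [Countable ι] [DecidableEq ι]
    -- the family of linear subspaces expressing the structures
    (L : ι → Submodule ℝ (EuclideanSpace ℝ (Fin N)))
    -- the parameter set and the data distributions, with mean `θ`
    (Θ : Set (EuclideanSpace ℝ (Fin N)))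
    (Pθ : EuclideanSpace ℝ (Fin N) → Measure (EuclideanSpace ℝ (Fin N)))
    (hP : ∀ θ ∈ Θ, IsProbabilityMeasure (Pθ θ))
    (σ : ℝ) (hσ : 0 < σ)
    (hmean : ∀ θ ∈ Θ, ∫ y, y ∂(Pθ θ) = θ)
    -- Condition (A1), with `ξ = σ⁻¹(Y − θ)`
    (α : ℝ) (hα0 : 0 < α) (hα1 : α ≤ 1)
    (d : ι → ℝ) (hd0 : ∀ i, 0 ≤ d i)
    (hA1 : ∀ θ ∈ Θ, ∀ i : ι,
      ∫⁻ y, ENNReal.ofReal (exp (α * ‖proj (L i) (σ⁻¹ • (y - θ))‖ ^ 2)) ∂(Pθ θ)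
        ≤ ENNReal.ofReal (exp (d i)))
    -- Condition (A2)
    (ν Cν : ℝ) (hν : 0 < ν) (hCν : 0 < Cν)
    (ρ : ι → ℝ) (hρ0 : ∀ i, 0 ≤ ρ i)
    (hA2sum : Summable fun i : ι => exp (-ν * ρ i))
    (hA2 : ∑' i : ι, exp (-ν * ρ i) ≤ Cν)
    (hρd : ∀ i, d i ≤ ρ i)
    -- the DDM tuning parameter
    (κ : ℝ) (hκ : (32 * ν + 10 + α) / (4 * α) < κ)
    -- the structure selector `Î` (a minimizer of the penalized criterion)
    (Ihat : EuclideanSpace ℝ (Fin N) → ι)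
    (hIhat : ∀ y i, ‖y - proj (L (Ihat y)) y‖ ^ 2 + 2 * κ * σ ^ 2 * ρ (Ihat y)
      ≤ ‖y - proj (L i) y‖ ^ 2 + 2 * κ * σ ^ 2 * ρ i)
    -- the structure DDM weights: either `π̃(I|Y)` (MA) or `π̌(I|Y) = 1{I = Î}` (MS)
    (phat : ι → EuclideanSpace ℝ (Fin N) → ℝ)
    (hphat :
      (∀ i y, phat i y =
          exp (-κ * ρ i) * exp (-‖y - proj (L i) y‖ ^ 2 / (2 * σ ^ 2)) /
            ∑' j : ι, exp (-κ * ρ j) * exp (-‖y - proj (L j) y‖ ^ 2 / (2 * σ ^ 2))) ∨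
        (∀ i y, phat i y = if Ihat y = i then 1 else 0))
    -- `κ ≥ ν/α`
    (hκ2 : ν / α ≤ κ)
    -- Condition (A3)
    (hA3 : ∀ i₀ i₁ : ι, ∃ i' : ι,
      (L i₀ : Set (EuclideanSpace ℝ (Fin N))) ∪ (L i₁ : Set (EuclideanSpace ℝ (Fin N)))
        ⊆ (L i' : Set (EuclideanSpace ℝ (Fin N))) ∧ ρ i' ≤ ρ i₀ + ρ i₁)
    -- the `τ₀`-oracle `I_*(θ)`, minimizing `I ↦ ‖θ − P_I θ‖² + τ₀σ²ρ(I)`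
    (δ : ℝ) (hδ0 : 0 < δ) (hδ1 : δ < 1)
    (τ₀ : ℝ) (hτ₀ : (1 + δ) / (1 - δ) * (3 * (1 + κ * α) / α) < τ₀)
    (Istar : EuclideanSpace ℝ (Fin N) → ι)
    (hIstar : ∀ θ i, ‖θ - proj (L (Istar θ)) θ‖ ^ 2 + τ₀ * σ ^ 2 * ρ (Istar θ)
      ≤ ‖θ - proj (L i) θ‖ ^ 2 + τ₀ * σ ^ 2 * ρ i) :
    ∀ θ ∈ Θ, ∀ M : ℝ, 0 ≤ M →
      -- `E_θ[ Σ_{I ∈ 𝓘 : ρ(I) ≤ δρ(I_*) − M} p̂_I ]`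
      ∫⁻ y, (∑' i : ι,
          if ρ i ≤ δ * ρ (Istar θ) - M then ENNReal.ofReal (phat i y) else 0) ∂(Pθ θ)
        ≤ ENNReal.ofReal (Cν * exp (-(τ₀ * α / 3) * M)) := by
  intro θ hθ M hM
  have hσ2 : (0:ℝ) < σ ^ 2 := by positivity
  have h2σ : (0:ℝ) < 2 * σ ^ 2 := by positivity
  have hνκα : ν ≤ κ * α := (div_le_iff₀ hα0).1 hκ2
  have hκα : 0 < κ * α := lt_of_lt_of_le hν hνκα
  have hκpos : 0 < κ := by
    rcases mul_pos_iff.1 hκα with h | h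
    · exact h.1
    · exact absurd hα0 (not_lt.2 h.2.le)
  have h1δ : (0:ℝ) < 1 - δ := by linarith
  have hposδα : (0:ℝ) < (1 - δ) * α := mul_pos h1δ hα0
  have he : (1 + δ) / (1 - δ) * (3 * (1 + κ * α) / α)
      = 3 * (1 + δ) * (1 + κ * α) / ((1 - δ) * α) := by
    field_simp
  rw [he] at hτ₀
  have hkey := (div_lt_iff₀ hposδα).1 hτ₀
  have hτpos : 0 < τ₀ := by
    by_contra h
    push_neg at h
    have h2 : τ₀ * ((1 - δ) * α) ≤ 0 := mul_nonpos_of_nonpos_of_nonneg h hposδα.le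
    nlinarith
  choose F hF1 hF2 using hA3
  set r : ℝ := ρ (Istar θ) with hr'
  have hr : 0 ≤ r := hρ0 _
  set J : ι → ι := fun i => F i (Istar θ) with hJ
  have hij : ∀ i, L i ≤ L (J i) := fun i x hx => hF1 i (Istar θ) (Set.mem_union_left _ hx)
  have hsj : ∀ i, L (Istar θ) ≤ L (J i) :=
    fun i x hx => hF1 i (Istar θ) (Set.mem_union_right _ hx)
  have hJρ : ∀ i, ρ (J i) ≤ ρ i + r := fun i => hF2 i (Istar θ)
  -- step 1: pointwise bound on the weights
  have key1 : ∀ i y, phat i y ≤ Real.exp (α * (κ * (ρ (J i) - ρ i) +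
      (‖y - proj (L (J i)) y‖ ^ 2 - ‖y - proj (L i) y‖ ^ 2) / (2 * σ ^ 2))) := by
    intro i y
    rcases hphat with hMA | hMS
    · rw [hMA i y]
      exact aux_ma_bound L σ hσ α hα0 hα1 ν hν ρ hρ0 hA2sum κ hκpos hνκα i (J i) y
    · rw [hMS i y]
      split_ifs with h
      · apply Real.one_le_exp
        have h0 := hIhat y (J i)
        rw [h] at h0
        have h4 : -(κ * (ρ (J i) - ρ i))
            ≤ (‖y - proj (L (J i)) y‖ ^ 2 - ‖y - proj (L i) y‖ ^ 2) / (2 * σ ^ 2) := by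
          rw [le_div_iff₀ h2σ]; nlinarith
        have hE : 0 ≤ κ * (ρ (J i) - ρ i) +
            (‖y - proj (L (J i)) y‖ ^ 2 - ‖y - proj (L i) y‖ ^ 2) / (2 * σ ^ 2) := by
          linarith
        exact mul_nonneg hα0.le hE
      · positivity
  -- step 2: oracle/geometric bound
  have key2 : ∀ i y, phat i y ≤ Real.exp (α * κ * r - α * τ₀ / 3 * (r - ρ i)) *
      Real.exp (α * ‖proj (L (J i)) (σ⁻¹ • (y - θ))‖ ^ 2) := by
    intro i y
    refine (key1 i y).trans ?_
    rw [← Real.exp_add]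
    apply Real.exp_le_exp.2
    exact aux_geom_bound (L i) (L (J i)) (L (Istar θ)) (hij i) (hsj i) σ hσ α hα0 κ hκpos
      (ρ i) (ρ (J i)) r τ₀ (hJρ i) θ y (hIstar θ i)
  -- measurability of the bounding functions
  have hcont : ∀ i, Measurable fun y : EuclideanSpace ℝ (Fin N) =>
      ENNReal.ofReal (Real.exp (α * ‖proj (L (J i)) (σ⁻¹ • (y - θ))‖ ^ 2)) := by
    intro i
    apply ENNReal.measurable_ofReal.comp
    apply Continuous.measurable
    exact Real.continuous_exp.comp (continuous_const.mul
      (((proj (L (J i))).continuous.comp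
        ((continuous_id.sub continuous_const).const_smul σ⁻¹)).norm.pow 2))
  -- per-structure integral bound
  have intbound : ∀ i, ρ i ≤ δ * r - M →
      (∫⁻ y, ENNReal.ofReal (Real.exp (α * κ * r - α * τ₀ / 3 * (r - ρ i)) *
        Real.exp (α * ‖proj (L (J i)) (σ⁻¹ • (y - θ))‖ ^ 2)) ∂(Pθ θ))
      ≤ ENNReal.ofReal (Real.exp (-ν * ρ i) * Real.exp (-(τ₀ * α / 3) * M)) := by
    intro i hcond
    have hc : (0:ℝ) ≤ Real.exp (α * κ * r - α * τ₀ / 3 * (r - ρ i)) := Real.exp_nonneg _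
    calc ∫⁻ y, ENNReal.ofReal (Real.exp (α * κ * r - α * τ₀ / 3 * (r - ρ i)) *
            Real.exp (α * ‖proj (L (J i)) (σ⁻¹ • (y - θ))‖ ^ 2)) ∂(Pθ θ)
        = ∫⁻ y, ENNReal.ofReal (Real.exp (α * κ * r - α * τ₀ / 3 * (r - ρ i))) *
            ENNReal.ofReal (Real.exp (α * ‖proj (L (J i)) (σ⁻¹ • (y - θ))‖ ^ 2)) ∂(Pθ θ) := by
          simp_rw [ENNReal.ofReal_mul hc]
      _ = ENNReal.ofReal (Real.exp (α * κ * r - α * τ₀ / 3 * (r - ρ i))) *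
            ∫⁻ y, ENNReal.ofReal (Real.exp (α * ‖proj (L (J i)) (σ⁻¹ • (y - θ))‖ ^ 2)) ∂(Pθ θ) :=
          lintegral_const_mul _ (hcont i)
      _ ≤ ENNReal.ofReal (Real.exp (α * κ * r - α * τ₀ / 3 * (r - ρ i))) *
            ENNReal.ofReal (Real.exp (d (J i))) := mul_le_mul_right (hA1 θ hθ (J i)) _
      _ = ENNReal.ofReal (Real.exp (α * κ * r - α * τ₀ / 3 * (r - ρ i)) *
            Real.exp (d (J i))) := (ENNReal.ofReal_mul hc).symm
      _ ≤ ENNReal.ofReal (Real.exp (-ν * ρ i) * Real.exp (-(τ₀ * α / 3) * M)) := by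
          apply ENNReal.ofReal_le_ofReal
          rw [← Real.exp_add, ← Real.exp_add]
          apply Real.exp_le_exp.2
          have hdJ : d (J i) ≤ ρ i + r := (hρd (J i)).trans (hJρ i)
          have := aux_arith α ν δ κ τ₀ r (ρ i) M (d (J i)) hα0 hν hδ0 hδ1 hνκα hM hr
            hkey hτpos hcond hdJ
          linarith
  -- assemble
  calc ∫⁻ y, (∑' i : ι, if ρ i ≤ δ * ρ (Istar θ) - M
          then ENNReal.ofReal (phat i y) else 0) ∂(Pθ θ)
      ≤ ∫⁻ y, (∑' i : ι, if ρ i ≤ δ * ρ (Istar θ) - M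
          then ENNReal.ofReal (Real.exp (α * κ * r - α * τ₀ / 3 * (r - ρ i)) *
            Real.exp (α * ‖proj (L (J i)) (σ⁻¹ • (y - θ))‖ ^ 2)) else 0) ∂(Pθ θ) := by
        apply lintegral_mono
        intro y
        apply ENNReal.tsum_le_tsum
        intro i
        split_ifs with h
        · exact ENNReal.ofReal_le_ofReal (key2 i y)
        · exact le_rfl
    _ = ∑' i : ι, ∫⁻ y, (if ρ i ≤ δ * ρ (Istar θ) - M
          then ENNReal.ofReal (Real.exp (α * κ * r - α * τ₀ / 3 * (r - ρ i)) *
            Real.exp (α * ‖proj (L (J i)) (σ⁻¹ • (y - θ))‖ ^ 2)) else 0) ∂(Pθ θ) := by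
        apply lintegral_tsum
        intro i
        by_cases h : ρ i ≤ δ * ρ (Istar θ) - M
        · simp only [if_pos h]
          exact ((ENNReal.measurable_ofReal.comp measurable_const).mul (hcont i)).aemeasurable.congr
            (by filter_upwards with y; rw [Pi.mul_apply, Function.comp_apply, ← ENNReal.ofReal_mul (Real.exp_nonneg _)])
        · simp only [if_neg h]
          exact aemeasurable_const
    _ ≤ ∑' i : ι, (if ρ i ≤ δ * ρ (Istar θ) - M
          then ENNReal.ofReal (Real.exp (-ν * ρ i) * Real.exp (-(τ₀ * α / 3) * M)) else 0) := by
        apply ENNReal.tsum_le_tsum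
        intro i
        by_cases h : ρ i ≤ δ * ρ (Istar θ) - M
        · simp only [if_pos h]
          exact intbound i h
        · simp only [if_neg h, lintegral_const, zero_mul, le_refl]
    _ ≤ ∑' i : ι, ENNReal.ofReal (Real.exp (-ν * ρ i)) *
          ENNReal.ofReal (Real.exp (-(τ₀ * α / 3) * M)) := by
        apply ENNReal.tsum_le_tsum
        intro i
        split_ifs with h
        · rw [ENNReal.ofReal_mul (Real.exp_nonneg _)]
        · positivity
    _ = (∑' i : ι, ENNReal.ofReal (Real.exp (-ν * ρ i))) *
          ENNReal.ofReal (Real.exp (-(τ₀ * α / 3) * M)) := ENNReal.tsum_mul_right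
    _ ≤ ENNReal.ofReal Cν * ENNReal.ofReal (Real.exp (-(τ₀ * α / 3) * M)) := by
        apply mul_le_mul_left
        rw [← ENNReal.ofReal_tsum_of_nonneg (fun i => Real.exp_nonneg _) hA2sum]
        exact ENNReal.ofReal_le_ofReal hA2
    _ = ENNReal.ofReal (Cν * Real.exp (-(τ₀ * α / 3) * M)) := (ENNReal.ofReal_mul hCν.le).symm
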